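/- arXiv:1910.02164 — 3 statements merged into one kernel-verified Lean document; each statement's English description precedes it below -/
import Mathlib

section
/- Let f: A* → ℝ ∪ {⊥} be a function computable both by a min-plus word automaton and by a max-plus word automaton. Then f is computable by an unambiguous tropical word automaton (a weighted automaton with at most one accepting run per input word). -/
/-- A word automaton with real weights on transitions and final states. -/
structure WWA (A : Type) (Q : Type) where
  init : Q → Prop
  trans : Q → A → Q → Prop
  wt : Q → A → Q → ℝ
  final : Q → Prop
  fwt : Q → ℝ

/-- A run of `M` over the word `w`: a sequence of states starting in an initial state and
following transitions. -/
def WIsRun {A Q : Type} (M : WWA A Q) (w : List A) (ρ : Fin (w.length + 1) → Q) : Prop :=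
  M.init (ρ 0) ∧ ∀ i : Fin w.length, M.trans (ρ i.castSucc) (w.get i) (ρ i.succ)

/-- An accepting run: a run ending in a final state. -/
def WIsAcc {A Q : Type} (M : WWA A Q) (w : List A) (ρ : Fin (w.length + 1) → Q) : Prop :=
  WIsRun M w ρ ∧ M.final (ρ (Fin.last w.length))

/-- The weight of a run: the sum of the weights of its transitions. -/
def WWt {A Q : Type} (M : WWA A Q) (w : List A) (ρ : Fin (w.length + 1) → Q) : ℝ :=
  ∑ i : Fin w.length, M.wt (ρ i.castSucc) (w.get i) (ρ i.succ)

/-- `x` is the weight of some accepting run of `M` over `w` (weight of the run plus the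
weight of the final state reached). -/
def WAccWeight {A Q : Type} (M : WWA A Q) (w : List A) (x : ℝ) : Prop :=
  ∃ ρ : Fin (w.length + 1) → Q,
    WIsAcc M w ρ ∧ WWt M w ρ + M.fwt (ρ (Fin.last w.length)) = x

/-- `f` is the max-plus semantics of `M`: `f w = ⊥` iff there is no accepting run over
`w`, and otherwise `f w` is the maximum weight of an accepting run. -/
def WComputesMax {A Q : Type} (M : WWA A Q) (f : List A → Option ℝ) : Prop :=
  ∀ w, (f w = none ↔ ¬ ∃ x, WAccWeight M w x) ∧
    ∀ x, f w = some x → WAccWeight M w x ∧ ∀ y, WAccWeight M w y → y ≤ x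

/-- `f` is the min-plus semantics of `M`. -/
def WComputesMin {A Q : Type} (M : WWA A Q) (f : List A → Option ℝ) : Prop :=
  ∀ w, (f w = none ↔ ¬ ∃ x, WAccWeight M w x) ∧
    ∀ x, f w = some x → WAccWeight M w x ∧ ∀ y, WAccWeight M w y → x ≤ y

/-- `M` is unambiguous: every word admits at most one accepting run. -/
def WUnambiguous {A Q : Type} (M : WWA A Q) : Prop :=
  ∀ (w : List A) (ρ ρ' : Fin (w.length + 1) → Q),
    WIsAcc M w ρ → WIsAcc M w ρ' → ρ = ρ'

namespace LM

variable {A T : Type}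

/-- A walk of `M` from `q` over word `w` through the full state list `s` (including both
endpoints), ending at the last argument, with transition-weight sum the last argument. -/
inductive Walk (M : WWA A T) : T → List A → List T → T → ℝ → Prop
  | nil (q : T) : Walk M q [] [q] q 0
  | cons {q q' q'' : T} {a : A} {w : List A} {s : List T} {c : ℝ} :
      M.trans q a q' → Walk M q' w s q'' c →
      Walk M q (a :: w) (q :: s) q'' (M.wt q a q' + c)

theorem Walk.head_eq {M : WWA A T} {q w s q' c} (h : Walk M q w s q' c) :
    ∃ t, s = q :: t := by cases h <;> exact ⟨_, rfl⟩

theorem Walk.length_eq {M : WWA A T} {q w s q' c} (h : Walk M q w s q' c) :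
    s.length = w.length + 1 := by
  induction h with
  | nil => rfl
  | cons _ _ ih => simp [ih]

theorem Walk.last_eq {M : WWA A T} {q w s q' c} (h : Walk M q w s q' c) (hne : s ≠ []) :
    s.getLast hne = q' := by
  induction h with
  | nil => rfl
  | cons _ hw ih =>
      obtain ⟨t, rfl⟩ := hw.head_eq
      simpa [List.getLast] using ih (by simp)

/-- Determinism of endpoint and weight given the state list and the word. -/
theorem Walk.det {M : WWA A T} {q w s q' c q'' c'} (h : Walk M q w s q' c)
    (h' : Walk M q w s q'' c') : q'' = q' ∧ c' = c := by
  induction h generalizing c' with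
  | nil => cases h'; exact ⟨rfl, rfl⟩
  | cons _ hw ih =>
      obtain ⟨t, rfl⟩ := hw.head_eq
      cases h' with
      | cons ht' hw' =>
          obtain ⟨t', ht''⟩ := hw'.head_eq
          obtain ⟨rfl, rfl⟩ : _ ∧ t = t' := by
            constructor <;> [exact (List.cons.injEq _ _ _ _ ▸ ht'').1.symm;
              exact (List.cons.injEq _ _ _ _ ▸ ht'').2]
          obtain ⟨he, hc⟩ := ih hw'
          exact ⟨he, by rw [hc]⟩

theorem Walk.splice {M : WWA A T} {q u s q' c v s' q'' c'}
    (h : Walk M q u s q' c) (h' : Walk M q' v s' q'' c') :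
    Walk M q (u ++ v) (s ++ s'.tail) q'' (c + c') := by
  induction h with
  | nil =>
      obtain ⟨t, rfl⟩ := h'.head_eq
      simpa using h'
  | cons ht hw ih =>
      simpa [add_assoc] using Walk.cons ht (ih h')

theorem Walk.step {M : WWA A T} {q a q'} (ht : M.trans q a q') :
    Walk M q [a] [q, q'] q' (M.wt q a q') := by
  simpa using Walk.cons ht (Walk.nil q')

/-- Splitting a walk over `u ++ [a]`. -/
theorem Walk.split_last {M : WWA A T} {q u a s q' c} (h : Walk M q (u ++ [a]) s q' c) :
    ∃ m t c₁, Walk M q u t m c₁ ∧ M.trans m a q' ∧ s = t ++ [q'] ∧ c = c₁ + M.wt m a q' := by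
  induction u generalizing q s c with
  | nil =>
      cases h with
      | cons ht hw =>
          cases hw with
          | nil => exact ⟨q, [q], 0, Walk.nil q, ht, rfl, by ring⟩
  | cons b u ih =>
      cases h with
      | cons ht hw =>
          obtain ⟨m, t, c₁, hw', ht', rfl, rfl⟩ := ih hw
          exact ⟨m, _ :: t, _ + c₁, Walk.cons ht hw', ht', rfl, by ring⟩

theorem walk_mono {M M' : WWA A T} (htr : ∀ q a q', M.trans q a q' → M'.trans q a q')
    {q w s q' c} (h : Walk M q w s q' c) : ∃ c', Walk M' q w s q' c' := by
  induction h with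
  | nil => exact ⟨0, Walk.nil _⟩
  | cons ht _ ih => obtain ⟨c', hw⟩ := ih; exact ⟨_, Walk.cons (htr _ _ _ ht) hw⟩

/-- From a Fin-indexed run to a walk. -/
theorem walk_of_run {M : WWA A T} {w : List A} (ρ : Fin (w.length + 1) → T)
    (h : ∀ i : Fin w.length, M.trans (ρ i.castSucc) (w.get i) (ρ i.succ)) :
    Walk M (ρ 0) w (List.ofFn ρ) (ρ (Fin.last w.length)) (WWt M w ρ) := by
  induction w with
  | nil =>
      have h1 : (List.ofFn ρ) = [ρ 0] := by simp [List.ofFn_succ]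
      have h2 : WWt M [] ρ = 0 := by simp [WWt]
      rw [h1, h2]
      exact Walk.nil (ρ 0)
  | cons a w ih =>
      have htr' : ∀ i : Fin w.length,
          M.trans ((fun j : Fin (w.length + 1) => ρ j.succ) i.castSucc) (w.get i)
            ((fun j : Fin (w.length + 1) => ρ j.succ) i.succ) := fun i => h i.succ
      have key := Walk.cons (h (0 : Fin (w.length + 1)))
        (ih (fun j : Fin (w.length + 1) => ρ j.succ) htr')
      have h1 : List.ofFn ρ = ρ 0 :: List.ofFn (fun j : Fin (w.length + 1) => ρ j.succ) :=
        List.ofFn_succ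
      have h2 : WWt M (a :: w) ρ =
          M.wt (ρ ((0 : Fin (w.length + 1)).castSucc)) ((a :: w).get (0 : Fin (w.length + 1)))
              (ρ (0 : Fin (w.length + 1)).succ)
            + WWt M w (fun j : Fin (w.length + 1) => ρ j.succ) := by
        show ∑ i : Fin (w.length + 1), M.wt (ρ i.castSucc) ((a :: w).get i) (ρ i.succ) = _
        rw [Fin.sum_univ_succ]
        congr 1
      have h3 : ρ (Fin.last (a :: w).length)
          = (fun j : Fin (w.length + 1) => ρ j.succ) (Fin.last w.length) := rfl
      rw [h1, h2, h3]
      exact key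

/-- From a walk to a Fin-indexed run. -/
theorem run_of_walk {M : WWA A T} {q w s q' c} (h : Walk M q w s q' c) :
    ∃ ρ : Fin (w.length + 1) → T, ρ 0 = q ∧ ρ (Fin.last w.length) = q' ∧
      List.ofFn ρ = s ∧ (∀ i : Fin w.length, M.trans (ρ i.castSucc) (w.get i) (ρ i.succ)) ∧
      WWt M w ρ = c := by
  induction h with
  | nil q =>
      refine ⟨fun _ => q, rfl, rfl, by simp [List.ofFn_succ], fun i => i.elim0, by simp [WWt]⟩
  | @cons q q' q'' a w s c ht hw ih =>
      obtain ⟨ρ', h0, hl, hofn, htr, hwt⟩ := ih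
      simp only [WWt, List.length_cons]
      refine ⟨Fin.cons q ρ', Fin.cons_zero _ _, ?_, ?_, ?_, ?_⟩
      · rw [← Fin.succ_last, Fin.cons_succ]; exact hl
      · simp only [List.ofFn_succ, Fin.cons_zero, Fin.cons_succ]
        rw [← List.ofFn_succ, hofn]
      · intro i
        refine Fin.cases ?_ ?_ i
        · rw [Fin.castSucc_zero, Fin.cons_zero, Fin.cons_succ, h0]
          simpa using ht
        · intro j
          rw [← Fin.succ_castSucc, Fin.cons_succ, Fin.cons_succ]
          simpa using htr j
      · rw [Fin.sum_univ_succ]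
        have e1 : M.wt (Fin.cons (α := fun _ => T) q ρ' (Fin.castSucc (0 : Fin (w.length + 1))))
            ((a :: w).get (0 : Fin (w.length + 1)))
            (Fin.cons (α := fun _ => T) q ρ' (Fin.succ (0 : Fin (w.length + 1)))) = M.wt q a q' := by
          rw [Fin.castSucc_zero, Fin.cons_zero, Fin.cons_succ, h0]
          simp
        have e2 : ∀ j : Fin w.length,
            M.wt (Fin.cons (α := fun _ => T) q ρ' (Fin.castSucc (Fin.succ j)))
              ((a :: w).get ((Fin.succ j : Fin (w.length + 1))))
              (Fin.cons (α := fun _ => T) q ρ' (Fin.succ (Fin.succ j)))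
            = M.wt (ρ' j.castSucc) (w.get j) (ρ' j.succ) := by
          intro j
          rw [← Fin.succ_castSucc, Fin.cons_succ, Fin.cons_succ]
          simp
        rw [e1, Finset.sum_congr rfl (fun j _ => e2 j)]
        rw [WWt] at hwt
        rw [hwt]

/-- List-level acceptance. -/
def LAcc (M : WWA A T) (w : List A) (s : List T) (x : ℝ) : Prop :=
  ∃ q q' c, M.init q ∧ Walk M q w s q' c ∧ M.final q' ∧ x = c + M.fwt q'

theorem wacc_iff_lacc (M : WWA A T) (w : List A) (x : ℝ) :
    WAccWeight M w x ↔ ∃ s, LAcc M w s x := by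
  constructor
  · rintro ⟨ρ, ⟨⟨hi, htr⟩, hf⟩, hx⟩
    exact ⟨List.ofFn ρ, _, _, _, hi, walk_of_run ρ htr, hf, hx.symm⟩
  · rintro ⟨s, q, q', c, hi, hw, hf, hx⟩
    obtain ⟨ρ, h0, hl, _, htr, hwt⟩ := run_of_walk hw
    exact ⟨ρ, ⟨⟨h0 ▸ hi, htr⟩, hl ▸ hf⟩, by rw [hwt, hl]; exact hx.symm⟩


section Product

variable {A Q1 Q2 : Type}

/-- Product of a max-plus and a min-plus automaton, weighted by the difference. -/
def prodA (M1 : WWA A Q1) (M2 : WWA A Q2) : WWA A (Q1 × Q2) where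
  init q := M1.init q.1 ∧ M2.init q.2
  trans q a q' := M1.trans q.1 a q'.1 ∧ M2.trans q.2 a q'.2
  wt q a q' := M1.wt q.1 a q'.1 - M2.wt q.2 a q'.2
  final q := M1.final q.1 ∧ M2.final q.2
  fwt q := M1.fwt q.1 - M2.fwt q.2

theorem prod_unzip {M1 : WWA A Q1} {M2 : WWA A Q2} {q w s q' c}
    (h : Walk (prodA M1 M2) q w s q' c) :
    ∃ c1 c2, Walk M1 q.1 w (s.map Prod.fst) q'.1 c1 ∧
      Walk M2 q.2 w (s.map Prod.snd) q'.2 c2 ∧ c = c1 - c2 := by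
  induction h with
  | nil => exact ⟨0, 0, Walk.nil _, Walk.nil _, by ring⟩
  | cons ht _ ih =>
      obtain ⟨c1, c2, hw1, hw2, rfl⟩ := ih
      exact ⟨_ + c1, _ + c2, Walk.cons ht.1 hw1, Walk.cons ht.2 hw2, by show _ - _ + _ = _; ring⟩

theorem prod_zip {M1 : WWA A Q1} {M2 : WWA A Q2} {p w s1 p' c1}
    (h1 : Walk M1 p w s1 p' c1) :
    ∀ {r s2 r' c2}, Walk M2 r w s2 r' c2 →
      Walk (prodA M1 M2) (p, r) w (s1.zip s2) (p', r') (c1 - c2) := by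
  induction h1 with
  | nil q1 =>
      intro r s2 r' c2 h2
      cases h2 with
      | nil => simpa using Walk.nil (M := prodA M1 M2) (q1, r)
  | @cons q q' q'' a w s c ht hw ih =>
      intro r s2 r' c2 h2
      cases h2 with
      | @cons _ r1 _ _ _ s2' c2' ht2 hw2 =>
          have key := Walk.cons (M := prodA M1 M2) (q := (q, r)) (q' := (q', r1))
            ⟨ht, ht2⟩ (ih hw2)
          convert key using 1
          show M1.wt q a q' + c - (M2.wt r a r1 + c2')
            = M1.wt q a q' - M2.wt r a r1 + (c - c2')
          ring
          rfl

theorem walk_map_fst {Z : WWA A (Q1 × Q2)} {M1 : WWA A Q1}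
    (htr : ∀ q a q', Z.trans q a q' → M1.trans q.1 a q'.1)
    (hwt : ∀ q a q', Z.trans q a q' → Z.wt q a q' = M1.wt q.1 a q'.1)
    {q w s q' c} (h : Walk Z q w s q' c) : Walk M1 q.1 w (s.map Prod.fst) q'.1 c := by
  induction h with
  | nil => exact Walk.nil _
  | cons ht hw ih =>
      have := Walk.cons (htr _ _ _ ht) ih
      rwa [← hwt _ _ _ ht] at this

end Product

section PreSuf

variable {A T : Type}

/-- `q` is reachable from an initial state by a walk of weight `c`. -/
def Pre (M : WWA A T) (q : T) (c : ℝ) : Prop :=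
  ∃ q0 w s, M.init q0 ∧ Walk M q0 w s q c

/-- Some final state is reachable from `q`; `c` is walk weight plus final weight. -/
def Suf (M : WWA A T) (q : T) (c : ℝ) : Prop :=
  ∃ qf w s d, Walk M q w s qf d ∧ M.final qf ∧ c = d + M.fwt qf

theorem pre_init {M : WWA A T} {q} (h : M.init q) : Pre M q 0 :=
  ⟨q, [], [q], h, Walk.nil q⟩

theorem suf_final {M : WWA A T} {q} (h : M.final q) : Suf M q (M.fwt q) :=
  ⟨q, [], [q], 0, Walk.nil q, h, by ring⟩

theorem pre_step {M : WWA A T} {q c a q'} (h : Pre M q c) (ht : M.trans q a q') :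
    Pre M q' (c + M.wt q a q') := by
  obtain ⟨q0, w, s, hi, hw⟩ := h
  exact ⟨q0, w ++ [a], s ++ [q'], hi, by simpa using hw.splice (Walk.step ht)⟩

theorem suf_step {M : WWA A T} {q a q' e} (ht : M.trans q a q') (h : Suf M q' e) :
    Suf M q (M.wt q a q' + e) := by
  obtain ⟨qf, w, s, d, hw, hf, rfl⟩ := h
  obtain ⟨t, rfl⟩ := hw.head_eq
  exact ⟨qf, a :: w, q :: q' :: t, M.wt q a q' + d, Walk.cons ht hw, hf, by ring⟩

/-- Acceptance ignoring the weight. -/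
theorem lacc_of_pre_suf {M : WWA A T} {q c c'} (h : Pre M q c) (h' : Suf M q c') :
    ∃ w s, LAcc M w s (c + c') := by
  obtain ⟨q0, w, s, hi, hw⟩ := h
  obtain ⟨qf, w', s', d, hw', hf, rfl⟩ := h'
  exact ⟨w ++ w', s ++ s'.tail, q0, qf, c + d, hi, hw.splice hw', hf, by ring⟩

/-- The zero-useful initial states. -/
def Zinit (M : WWA A T) (q : T) : Prop := M.init q ∧ Suf M q 0

/-- The zero-useful final states. -/
def Zfin (M : WWA A T) (q : T) : Prop := M.final q ∧ Pre M q (-(M.fwt q))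

/-- The zero-useful transitions. -/
def Ztr (M : WWA A T) (q : T) (a : A) (q' : T) : Prop :=
  M.trans q a q' ∧ ∃ c, Pre M q c ∧ Suf M q' (-(c + M.wt q a q'))

/-- The zero-useful subautomaton, with the same weights. -/
def ZAut (M : WWA A T) : WWA A T where
  init := Zinit M
  trans := Ztr M
  wt := M.wt
  final := Zfin M
  fwt := M.fwt

theorem walk_of_zwalk {M : WWA A T} {q w s q' c} (h : Walk (ZAut M) q w s q' c) :
    Walk M q w s q' c := by
  induction h with
  | nil => exact Walk.nil _
  | cons ht _ ih => exact Walk.cons ht.1 ih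

variable {M : WWA A T} (hneg : ∀ w s x, LAcc M w s x → x ≤ 0)
include hneg

theorem pre_suf_le {q c c'} (h : Pre M q c) (h' : Suf M q c') : c + c' ≤ 0 := by
  obtain ⟨w, s, hacc⟩ := lacc_of_pre_suf h h'
  exact hneg w s _ hacc

theorem phi_unique {q c1 c2} (h1 : Pre M q c1) (h1' : Suf M q (-c1))
    (h2 : Pre M q c2) (h2' : Suf M q (-c2)) : c1 = c2 := by
  have a1 := pre_suf_le hneg h1 h2'
  have a2 := pre_suf_le hneg h2 h1'
  linarith

omit hneg in
theorem z_complete_walk : ∀ {q w s qf d c}, Pre M q c → Walk M q w s qf d → M.final qf →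
    c + (d + M.fwt qf) = 0 → Walk (ZAut M) q w s qf d := by
  intro q w s qf d c hpre hw
  induction hw generalizing c with
  | nil => intro _ _; exact Walk.nil _
  | @cons q q' q'' a w' s' d' ht hw ih =>
      intro hf heq
      have hsuf : Suf M q' (-(c + M.wt q a q')) := by
        refine ⟨q'', w', _, d', hw, hf, by linarith⟩
      exact Walk.cons (M := ZAut M) ⟨ht, c, hpre, hsuf⟩
        (ih (pre_step hpre ht) hf (by linarith))

theorem z_sound_walk : ∀ {q w s qf d c}, Walk (ZAut M) q w s qf d → Pre M q c →
    Suf M q (-c) → Zfin M qf → c + (d + M.fwt qf) = 0 := by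
  intro q w s qf d c hw
  induction hw generalizing c with
  | nil p =>
      intro hpre hsuf hfin
      have h1 : Suf M p (-(-(M.fwt p))) := by rw [neg_neg]; exact suf_final hfin.1
      have := phi_unique hneg hpre hsuf hfin.2 h1
      rw [this]; ring
  | @cons q q' q'' a w' s' d' ht hw ih =>
      intro hpre hsuf hfin
      obtain ⟨htr, c'', hpre'', hsuf''⟩ := ht
      have hsq : Suf M q (-c'') := by
        have := suf_step htr hsuf''
        have he : M.wt q a q' + -(c'' + M.wt q a q') = -c'' := by ring
        rwa [he] at this
      have hcc : c = c'' := phi_unique hneg hpre hsuf hpre'' hsq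
      subst hcc
      have := ih (pre_step hpre'' htr) hsuf'' hfin
      show c + (M.wt q a q' + d' + M.fwt q'') = 0
      linarith

end PreSuf


section MainFacts

variable {A Q1 Q2 : Type} {Mmax : WWA A Q1} {Mmin : WWA A Q2} {f : List A → Option ℝ}
  (hmax : WComputesMax Mmax f) (hmin : WComputesMin Mmin f)

include hmax hmin

/-- Every accepting run of the difference product has weight `≤ 0`. -/
theorem prod_neg : ∀ (w : List A) s x, LAcc (prodA Mmax Mmin) w s x → x ≤ 0 := by
  rintro w s x ⟨q, q', c, hi, hw, hf, rfl⟩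
  obtain ⟨c1, c2, hw1, hw2, rfl⟩ := prod_unzip hw
  have hacc1 : LAcc Mmax w (s.map Prod.fst) (c1 + Mmax.fwt q'.1) :=
    ⟨q.1, q'.1, c1, hi.1, hw1, hf.1, rfl⟩
  have hacc2 : LAcc Mmin w (s.map Prod.snd) (c2 + Mmin.fwt q'.2) :=
    ⟨q.2, q'.2, c2, hi.2, hw2, hf.2, rfl⟩
  have hw1' : WAccWeight Mmax w (c1 + Mmax.fwt q'.1) :=
    (wacc_iff_lacc _ _ _).mpr ⟨_, hacc1⟩
  have hw2' : WAccWeight Mmin w (c2 + Mmin.fwt q'.2) :=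
    (wacc_iff_lacc _ _ _).mpr ⟨_, hacc2⟩
  cases hfw : f w with
  | none => exact absurd ⟨_, hw1'⟩ ((hmax w).1.mp hfw)
  | some v =>
      have h1 := ((hmax w).2 v hfw).2 _ hw1'
      have h2 := ((hmin w).2 v hfw).2 _ hw2'
      show c1 - c2 + (Mmax.fwt q'.1 - Mmin.fwt q'.2) ≤ 0
      linarith

/-- Every word in the domain of `f` has a zero-weight accepting run in the zero
subautomaton of the product. -/
theorem exists_zero_run (w : List A) (x : ℝ) (hfw : f w = some x) :
    ∃ s, LAcc (ZAut (prodA Mmax Mmin)) w s 0 := by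
  obtain ⟨s1, q1, q1', c1, hi1, hw1, hf1, hx1⟩ :=
    (wacc_iff_lacc _ _ _).mp ((hmax w).2 x hfw).1
  obtain ⟨s2, q2, q2', c2, hi2, hw2, hf2, hx2⟩ :=
    (wacc_iff_lacc _ _ _).mp ((hmin w).2 x hfw).1
  have hw12 := prod_zip hw1 hw2
  have hfwt : (prodA Mmax Mmin).fwt (q1', q2') = Mmax.fwt q1' - Mmin.fwt q2' := rfl
  have htot : (c1 - c2) + (prodA Mmax Mmin).fwt (q1', q2') = 0 := by
    rw [hfwt]; linarith
  have hsuf : Suf (prodA Mmax Mmin) (q1, q2) 0 :=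
    ⟨(q1', q2'), w, _, c1 - c2, hw12, ⟨hf1, hf2⟩, by linarith⟩
  have hpre : Pre (prodA Mmax Mmin) (q1', q2') (-((prodA Mmax Mmin).fwt (q1', q2'))) := by
    have hp : Pre (prodA Mmax Mmin) (q1', q2') (c1 - c2) :=
      ⟨(q1, q2), w, _, ⟨hi1, hi2⟩, hw12⟩
    have : c1 - c2 = -((prodA Mmax Mmin).fwt (q1', q2')) := by linarith
    rwa [this] at hp
  refine ⟨s1.zip s2, (q1, q2), (q1', q2'), c1 - c2,
    ⟨⟨hi1, hi2⟩, hsuf⟩, ?_, ⟨⟨hf1, hf2⟩, hpre⟩, by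
      rw [show (ZAut (prodA Mmax Mmin)).fwt (q1', q2')
        = (prodA Mmax Mmin).fwt (q1', q2') from rfl]
      linarith⟩
  exact z_complete_walk (pre_init ⟨hi1, hi2⟩) hw12 ⟨hf1, hf2⟩ (by linarith)

/-- Any zero-weight accepting run of the product projects to a maximal run of `Mmax`. -/
theorem zero_run_fst (w : List A) (x : ℝ) (hfw : f w = some x) {s : List (Q1 × Q2)}
    (hacc : LAcc (prodA Mmax Mmin) w s 0) : LAcc Mmax w (s.map Prod.fst) x := by
  obtain ⟨q, q', c, hi, hw, hf, hval⟩ := hacc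
  obtain ⟨c1, c2, hw1, hw2, rfl⟩ := prod_unzip hw
  have hacc1 : LAcc Mmax w (s.map Prod.fst) (c1 + Mmax.fwt q'.1) :=
    ⟨q.1, q'.1, c1, hi.1, hw1, hf.1, rfl⟩
  have hacc2 : LAcc Mmin w (s.map Prod.snd) (c2 + Mmin.fwt q'.2) :=
    ⟨q.2, q'.2, c2, hi.2, hw2, hf.2, rfl⟩
  have h1 := ((hmax w).2 x hfw).2 _ ((wacc_iff_lacc _ _ _).mpr ⟨_, hacc1⟩)
  have h2 := ((hmin w).2 x hfw).2 _ ((wacc_iff_lacc _ _ _).mpr ⟨_, hacc2⟩)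
  have hval' : (c1 - c2) + (Mmax.fwt q'.1 - Mmin.fwt q'.2) = 0 := by
    rw [show (prodA Mmax Mmin).fwt q' = Mmax.fwt q'.1 - Mmin.fwt q'.2 from rfl] at hval
    linarith
  have : x = c1 + Mmax.fwt q'.1 := by linarith
  exact ⟨q.1, q'.1, c1, hi.1, hw1, hf.1, this⟩

/-- Accepting runs of the zero subautomaton are zero-weight accepting runs of the product. -/
theorem zaut_acc_spec {w : List A} {s : List (Q1 × Q2)} {y : ℝ}
    (h : LAcc (ZAut (prodA Mmax Mmin)) w s y) : LAcc (prodA Mmax Mmin) w s y ∧ y = 0 := by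
  obtain ⟨q, q', c, hi, hw, hf, rfl⟩ := h
  have hwP := walk_of_zwalk hw
  have haccP : LAcc (prodA Mmax Mmin) w s (c + (prodA Mmax Mmin).fwt q') :=
    ⟨q, q', c, hi.1, hwP, hf.1, rfl⟩
  refine ⟨haccP, ?_⟩
  have hs0 : Suf (prodA Mmax Mmin) q (-0) := by rw [neg_zero]; exact hi.2
  have := z_sound_walk (prod_neg hmax hmin) hw (pre_init hi.1) hs0 hf
  show c + (prodA Mmax Mmin).fwt q' = 0
  linarith

end MainFacts


section Lex

variable {T : Type}

/-- Lexicographic (strict) order on state sequences, via a rank function. -/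
inductive LtL (r : T → ℕ) : List T → List T → Prop
  | head {p p' : T} {s s' : List T} : r p < r p' → LtL r (p :: s) (p' :: s')
  | tail {p : T} {s s' : List T} : LtL r s s' → LtL r (p :: s) (p :: s')

theorem LtL.not_nil {r : T → ℕ} {s : List T} : ¬ LtL r [] s := fun h => by cases h

theorem ltl_irrefl {r : T → ℕ} : ∀ s, ¬ LtL r s s := by
  intro s h
  induction s with
  | nil => exact LtL.not_nil h
  | cons p s ih =>
      cases h with
      | head h => exact absurd h (lt_irrefl _)
      | tail h => exact ih h

theorem ltl_trichotomy {r : T → ℕ} (hr : Function.Injective r) :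
    ∀ (s s' : List T), s.length = s'.length → s = s' ∨ LtL r s s' ∨ LtL r s' s := by
  intro s
  induction s with
  | nil =>
      intro s' hl
      cases s' with
      | nil => exact Or.inl rfl
      | cons _ _ => simp at hl
  | cons p s ih =>
      intro s' hl
      cases s' with
      | nil => simp at hl
      | cons p' t' =>
          rcases Nat.lt_trichotomy (r p) (r p') with h | h | h
          · exact Or.inr (Or.inl (LtL.head h))
          · obtain rfl : p = p' := hr h
            rcases ih t' (by simpa using hl) with rfl | h | h
            · exact Or.inl rfl
            · exact Or.inr (Or.inl (LtL.tail h))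
            · exact Or.inr (Or.inr (LtL.tail h))
          · exact Or.inr (Or.inr (LtL.head h))

theorem ltl_append {r : T → ℕ} {t t0 : List T} (h : LtL r t t0) (x y : List T) :
    LtL r (t ++ x) (t0 ++ y) := by
  induction h with
  | head h => exact LtL.head h
  | tail _ ih => exact LtL.tail ih

theorem ltl_append_left {r : T → ℕ} {u v : List T} (h : LtL r u v) :
    ∀ t0 : List T, LtL r (t0 ++ u) (t0 ++ v) := by
  intro t0
  induction t0 with
  | nil => exact h
  | cons p t0 ih => exact LtL.tail ih

theorem ltl_split {r : T → ℕ} {p q : T} :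
    ∀ (t1 t0 : List T), t1.length = t0.length → LtL r (t1 ++ [p]) (t0 ++ [q]) →
      LtL r t1 t0 ∨ (t1 = t0 ∧ r p < r q) := by
  intro t1
  induction t1 with
  | nil =>
      intro t0 hl h
      cases t0 with
      | nil =>
          cases h with
          | head h => exact Or.inr ⟨rfl, h⟩
          | tail h => exact absurd h LtL.not_nil
      | cons _ _ => simp at hl
  | cons a t1 ih =>
      intro t0 hl h
      cases t0 with
      | nil => simp at hl
      | cons b t0 =>
          cases h with
          | head h => exact Or.inl (LtL.head h)
          | tail h =>
              rcases ih t0 (by simpa using hl) h with h2 | ⟨rfl, hpq⟩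
              · exact Or.inl (LtL.tail h2)
              · exact Or.inr ⟨rfl, hpq⟩

theorem ltl_singleton {r : T → ℕ} {p q : T} : LtL r [p] [q] ↔ r p < r q := by
  constructor
  · intro h
    cases h with
    | head h => exact h
    | tail h => exact absurd h LtL.not_nil
  · exact LtL.head

theorem exists_minimal_ltl {r : T → ℕ} (R : Set (List T)) (hfin : R.Finite)
    (hne : R.Nonempty) : ∃ s ∈ R, ∀ s' ∈ R, ¬ LtL r s' s := by
  haveI := hfin.to_subtype
  have htr : IsTrans R (fun a b : R => LtL r a.1 b.1) := by
    constructor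
    intro a b c hab hbc
    -- transitivity of LtL
    have key : ∀ (u v : List T), LtL r u v → ∀ z, LtL r v z → LtL r u z := by
      intro u v huv
      induction huv with
      | head h =>
          intro z hz
          cases hz with
          | head h' => exact LtL.head (h.trans h')
          | tail h' => exact LtL.head h
      | @tail p s s' hss ih =>
          intro z hz
          cases hz with
          | head h' => exact LtL.head h'
          | tail h' => exact LtL.tail (ih _ h')
    exact key _ _ hab _ hbc
  have hirr : IsIrrefl R (fun a b : R => LtL r a.1 b.1) := ⟨fun a => ltl_irrefl a.1⟩
  have hwf := Finite.wellFounded_of_trans_of_irrefl (α := R) (fun a b : R => LtL r a.1 b.1)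
  obtain ⟨m0, hm0⟩ := hne
  obtain ⟨⟨m, hm⟩, _, hmin⟩ := hwf.has_min Set.univ ⟨⟨m0, hm0⟩, trivial⟩
  exact ⟨m, hm, fun s' hs' h => hmin ⟨s', hs'⟩ trivial h⟩

end Lex

section Disamb

variable {A T : Type}

/-- The lexicographic disambiguation of `Z`. -/
def disamb (Z : WWA A T) (r : T → ℕ) : WWA A (T × Set T) where
  init u := Z.init u.1 ∧ u.2 = {p | Z.init p ∧ r p < r u.1}
  trans u a u' := Z.trans u.1 a u'.1 ∧
    u'.2 = {p' | (∃ p ∈ u.2, Z.trans p a p') ∨ (Z.trans u.1 a p' ∧ r p' < r u'.1)}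
  wt u a u' := Z.wt u.1 a u'.1
  final u := Z.final u.1 ∧ ∀ p ∈ u.2, ¬ Z.final p
  fwt u := Z.fwt u.1

/-- `t` is an initial run of `Z` over `w` ending at `p`. -/
def IRun (Z : WWA A T) (w : List A) (t : List T) (p : T) : Prop :=
  ∃ q0 c, Z.init q0 ∧ Walk Z q0 w t p c

/-- States reachable over `v` by an initial run lexicographically smaller than `t0`. -/
def Sof (Z : WWA A T) (r : T → ℕ) (v : List A) (t0 : List T) : Set T :=
  {p | ∃ t, IRun Z v t p ∧ LtL r t t0}

theorem irun_extend {Z : WWA A T} {v t0 q a q'} (h : IRun Z v t0 q) (ht : Z.trans q a q') :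
    IRun Z (v ++ [a]) (t0 ++ [q']) q' := by
  obtain ⟨q0, c, hi, hw⟩ := h
  exact ⟨q0, c + Z.wt q a q', hi, by simpa using hw.splice (Walk.step ht)⟩

theorem irun_length {Z : WWA A T} {v t0 q} (h : IRun Z v t0 q) : t0.length = v.length + 1 := by
  obtain ⟨q0, c, hi, hw⟩ := h
  exact hw.length_eq

theorem walk_nil_inv {Z : WWA A T} {q s p c} (h : Walk Z q [] s p c) :
    s = [q] ∧ p = q ∧ c = 0 := by cases h; exact ⟨rfl, rfl, rfl⟩

theorem sof_nil {Z : WWA A T} {r : T → ℕ} (q0 : T) :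
    Sof Z r [] [q0] = {p | Z.init p ∧ r p < r q0} := by
  ext p
  constructor
  · rintro ⟨t, ⟨q1, c, hi, hw⟩, hlt⟩
    obtain ⟨rfl, rfl, rfl⟩ := walk_nil_inv hw
    exact ⟨hi, ltl_singleton.mp hlt⟩
  · rintro ⟨hi, hlt⟩
    exact ⟨[p], ⟨p, 0, hi, Walk.nil p⟩, ltl_singleton.mpr hlt⟩

/-- The key step identity for the `S`-sets. -/
theorem sof_step {Z : WWA A T} {r : T → ℕ} {v t0 q} (h : IRun Z v t0 q) (a : A) (p₁ : T) :
    Sof Z r (v ++ [a]) (t0 ++ [p₁]) =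
      {p' | (∃ p ∈ Sof Z r v t0, Z.trans p a p') ∨ (Z.trans q a p' ∧ r p' < r p₁)} := by
  ext p'
  constructor
  · rintro ⟨t, ⟨q0, c, hi, hw⟩, hlt⟩
    obtain ⟨m, t1, c₁, hw1, htr, rfl, rfl⟩ := hw.split_last
    have hl1 : t1.length = t0.length := by rw [hw1.length_eq, irun_length h]
    rcases ltl_split t1 t0 hl1 hlt with hlt' | ⟨rfl, hlt'⟩
    · exact Or.inl ⟨m, ⟨t1, ⟨q0, c₁, hi, hw1⟩, hlt'⟩, htr⟩
    · obtain ⟨qh, ch, hih, hwh⟩ := h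
      obtain ⟨rfl, rfl⟩ : q0 = qh ∧ m = q := by
        obtain ⟨t', ht'⟩ := hw1.head_eq
        obtain ⟨t'', ht''⟩ := hwh.head_eq
        constructor
        · rw [ht''] at ht'
          exact ((List.cons.injEq _ _ _ _ ▸ ht').1).symm
        · have e1 := hw1.last_eq (by rw [ht']; simp)
          have e2 := hwh.last_eq (by rw [ht'']; simp)
          rw [← e1]
          conv_rhs => rw [← e2]
      exact Or.inr ⟨htr, hlt'⟩
  · rintro (⟨p, ⟨t, hir, hlt⟩, htr⟩ | ⟨htr, hlt⟩)
    · exact ⟨t ++ [p'], irun_extend hir htr, ltl_append hlt [p'] [p₁]⟩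
    · exact ⟨t0 ++ [p'], irun_extend h htr, ltl_append_left (ltl_singleton.mpr hlt) t0⟩

end Disamb


section Disamb2

variable {A T : Type} {Z : WWA A T} {r : T → ℕ}

/-- Projection of a walk of the disambiguation, with the invariant on the `S`-sets. -/
theorem disamb_proj :
    ∀ {u0 w σ uf c}, Walk (disamb Z r) u0 w σ uf c →
      ∀ {v t0}, IRun Z v t0 u0.1 → u0.2 = Sof Z r v t0 →
        Walk Z u0.1 w (σ.map Prod.fst) uf.1 c ∧
          uf.2 = Sof Z r (v ++ w) (t0 ++ (σ.map Prod.fst).tail) := by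
  intro u0 w σ uf c h
  induction h with
  | nil u =>
      intro v t0 hir hs
      refine ⟨Walk.nil _, ?_⟩
      simpa using hs
  | @cons u u' uf' a w' σ' c' ht hw ih =>
      intro v t0 hir hs
      obtain ⟨htr, hS⟩ := ht
      have hir' : IRun Z (v ++ [a]) (t0 ++ [u'.1]) u'.1 := irun_extend hir htr
      have hs' : u'.2 = Sof Z r (v ++ [a]) (t0 ++ [u'.1]) := by
        rw [hS, hs, sof_step hir a u'.1]
      obtain ⟨hwz, hend⟩ := ih hir' hs'
      refine ⟨Walk.cons htr hwz, ?_⟩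
      rw [hend]
      obtain ⟨t, rfl⟩ := hw.head_eq
      congr 1 <;> simp

/-- Lifting a walk of `Z` to the disambiguation. -/
theorem disamb_lift :
    ∀ {q w s qf c}, Walk Z q w s qf c → ∀ {v t0}, IRun Z v t0 q →
      ∃ σ, Walk (disamb Z r) (q, Sof Z r v t0) w σ
            (qf, Sof Z r (v ++ w) (t0 ++ s.tail)) c ∧
        σ.map Prod.fst = s := by
  intro q w s qf c h
  induction h with
  | nil q =>
      intro v t0 hir
      exact ⟨[(q, Sof Z r v t0)], by simpa using Walk.nil ((q, Sof Z r v t0)), rfl⟩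
  | @cons q q' q'' a w' s' c' ht hw ih =>
      intro v t0 hir
      obtain ⟨σ', hσ, hmap⟩ := ih (irun_extend hir ht)
      have hUtr : (disamb Z r).trans (q, Sof Z r v t0) a (q', Sof Z r (v ++ [a]) (t0 ++ [q'])) :=
        ⟨ht, sof_step (r := r) hir a q'⟩
      refine ⟨(q, Sof Z r v t0) :: σ', ?_, by rw [show ((q, Sof Z r v t0) :: σ').map Prod.fst
        = q :: σ'.map Prod.fst from rfl, hmap]⟩
      have key := Walk.cons hUtr hσ
      obtain ⟨t, rfl⟩ := hw.head_eq
      rw [show v ++ [a] ++ w' = v ++ a :: w' from by simp,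
        show t0 ++ [q'] ++ (q' :: t).tail = t0 ++ (q :: q' :: t).tail from by simp] at key
      exact key

end Disamb2


section Disamb3

variable {A T : Type} {Z : WWA A T} {r : T → ℕ}

/-- `Z` accepts `w` along the state sequence `s` (weight irrelevant). -/
def ZAcc (Z : WWA A T) (w : List A) (s : List T) : Prop :=
  ∃ qf, IRun Z w s qf ∧ Z.final qf

theorem disamb_sound {w σ x} (h : LAcc (disamb Z r) w σ x) :
    LAcc Z w (σ.map Prod.fst) x ∧ ∀ s', ZAcc Z w s' → ¬ LtL r s' (σ.map Prod.fst) := by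
  obtain ⟨u0, uf, c, hi, hw, hf, rfl⟩ := h
  have hir : IRun Z [] [u0.1] u0.1 := ⟨u0.1, 0, hi.1, Walk.nil _⟩
  have hs : u0.2 = Sof Z r [] [u0.1] := by rw [sof_nil]; exact hi.2
  obtain ⟨hwz, hend⟩ := disamb_proj hw hir hs
  obtain ⟨t, rfl⟩ := hw.head_eq
  have hmapc : ((u0 :: t).map Prod.fst) = u0.1 :: t.map Prod.fst := rfl
  have hend' : uf.2 = Sof Z r w ((u0 :: t).map Prod.fst) := by
    rw [hend]
    simp [hmapc]
  constructor
  · exact ⟨u0.1, uf.1, c, hi.1, hwz, hf.1, rfl⟩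
  · rintro s' ⟨qf', hir', hfin'⟩ hlt
    have : qf' ∈ uf.2 := by
      rw [hend']
      exact ⟨s', hir', hlt⟩
    exact hf.2 qf' this hfin'

theorem disamb_exists {w s} (hacc : ZAcc Z w s)
    (hmin : ∀ s', ZAcc Z w s' → ¬ LtL r s' s) :
    ∃ σ x, LAcc (disamb Z r) w σ x ∧ σ.map Prod.fst = s ∧
      ∀ q q' c, Z.init q → Walk Z q w s q' c → Z.final q' → x = c + Z.fwt q' := by
  obtain ⟨qf, ⟨q0, c, hi, hw⟩, hfin⟩ := hacc
  have hir : IRun Z [] [q0] q0 := ⟨q0, 0, hi, Walk.nil _⟩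
  obtain ⟨σ, hσ, hmap⟩ := disamb_lift (r := r) hw hir
  obtain ⟨t, rfl⟩ := hw.head_eq
  have e : [q0] ++ (q0 :: t).tail = q0 :: t := by simp
  rw [show ([] : List A) ++ w = w from by simp, e] at hσ
  refine ⟨σ, c + Z.fwt qf, ⟨(q0, Sof Z r [] [q0]), (qf, Sof Z r w (q0 :: t)), c,
    ⟨hi, sof_nil (Z := Z) (r := r) q0⟩, hσ, ⟨hfin, ?_⟩, rfl⟩, hmap, ?_⟩
  · rintro p ⟨tp, hirp, hltp⟩ hfp
    exact hmin tp ⟨p, hirp, hfp⟩ hltp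
  · intro q q' cx hq hwx hq'
    obtain ⟨t', ht'⟩ := hwx.head_eq
    obtain rfl : q0 = q := (List.cons.injEq _ _ _ _ ▸ ht').1
    obtain ⟨rfl, rfl⟩ := hw.det hwx
    rfl

theorem disamb_walk_unique :
    ∀ {u0 w σ uf c σ' uf' c'}, Walk (disamb Z r) u0 w σ uf c →
      Walk (disamb Z r) u0 w σ' uf' c' → σ.map Prod.fst = σ'.map Prod.fst →
      σ = σ' ∧ uf = uf' ∧ c = c' := by
  intro u0 w σ uf c σ' uf' c' h
  induction h generalizing σ' uf' c' with
  | nil u =>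
      intro h' _
      obtain ⟨rfl, rfl, rfl⟩ := walk_nil_inv h'
      exact ⟨rfl, rfl, rfl⟩
  | @cons u u1 ufx a w' σ1 c1 ht hw ih =>
      intro h' hmap
      cases h' with
      | @cons _ u1' _ _ _ σ1' c1' ht' hw' =>
          obtain ⟨t, rfl⟩ := hw.head_eq
          obtain ⟨t', rfl⟩ := hw'.head_eq
          have h11 : u1.1 = u1'.1 := by
            have := hmap
            simp only [List.map_cons, List.cons.injEq] at this
            exact this.2.1
          have hu1 : u1 = u1' := by
            obtain ⟨htr, hS⟩ := ht
            obtain ⟨htr', hS'⟩ := ht'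
            apply Prod.ext h11
            rw [hS, hS', h11]
          subst hu1
          obtain ⟨h1, rfl, rfl⟩ := ih hw' (by simpa using hmap)
          exact ⟨by rw [h1], rfl, rfl⟩

theorem disamb_acc_unique (hr : Function.Injective r) {w σ σ' x x'}
    (h : LAcc (disamb Z r) w σ x) (h' : LAcc (disamb Z r) w σ' x') :
    σ = σ' ∧ x = x' := by
  obtain ⟨hz, hm⟩ := disamb_sound h
  obtain ⟨hz', hm'⟩ := disamb_sound h'
  -- the projections are equal
  have hzacc : ZAcc Z w (σ.map Prod.fst) := by
    obtain ⟨q, q', c, hi, hw, hf, _⟩ := hz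
    exact ⟨q', ⟨q, c, hi, hw⟩, hf⟩
  have hzacc' : ZAcc Z w (σ'.map Prod.fst) := by
    obtain ⟨q, q', c, hi, hw, hf, _⟩ := hz'
    exact ⟨q', ⟨q, c, hi, hw⟩, hf⟩
  have hlen : (σ.map Prod.fst).length = (σ'.map Prod.fst).length := by
    obtain ⟨q, q', c, hi, hw, hf, _⟩ := hz
    obtain ⟨q2, q2', c2, hi2, hw2, hf2, _⟩ := hz'
    rw [hw.length_eq, hw2.length_eq]
  have hmapeq : σ.map Prod.fst = σ'.map Prod.fst := by
    rcases ltl_trichotomy hr _ _ hlen with h0 | h0 | h0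
    · exact h0
    · exact absurd h0 (hm' _ hzacc)
    · exact absurd h0 (hm _ hzacc')
  -- starting states are equal
  obtain ⟨u0, uf, c, hi, hw, hf, rfl⟩ := h
  obtain ⟨u0', uf', c', hi', hw', hf', rfl⟩ := h'
  obtain ⟨t, rfl⟩ := hw.head_eq
  obtain ⟨t', rfl⟩ := hw'.head_eq
  have h00 : u0.1 = u0'.1 := by
    simp only [List.map_cons, List.cons.injEq] at hmapeq
    exact hmapeq.1
  have hu0 : u0 = u0' := by
    apply Prod.ext h00
    rw [hi.2, hi'.2, h00]
  subst hu0
  obtain ⟨h1, rfl, rfl⟩ := disamb_walk_unique hw hw' hmapeq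
  exact ⟨by rw [h1], rfl⟩

end Disamb3


section Assembly

variable {A Q1 Q2 : Type}

/-- The zero subautomaton of the product, reweighted with the max-plus weights. -/
def Zmax (Mmax : WWA A Q1) (Mmin : WWA A Q2) : WWA A (Q1 × Q2) where
  init := Zinit (prodA Mmax Mmin)
  trans := Ztr (prodA Mmax Mmin)
  wt q a q' := Mmax.wt q.1 a q'.1
  final := Zfin (prodA Mmax Mmin)
  fwt q := Mmax.fwt q.1

variable {Mmax : WWA A Q1} {Mmin : WWA A Q2} {f : List A → Option ℝ}
  (hmax : WComputesMax Mmax f) (hmin : WComputesMin Mmin f)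

omit hmax hmin in
/-- Projection of a `Zmax` walk to `Mmax`, preserving weights. -/
theorem zmax_proj {q w s q' c} (h : Walk (Zmax Mmax Mmin) q w s q' c) :
    Walk Mmax q.1 w (s.map Prod.fst) q'.1 c :=
  walk_map_fst (Z := Zmax Mmax Mmin) (M1 := Mmax)
    (fun _ _ _ ht => ht.1.1) (fun _ _ _ _ => rfl) h

include hmax hmin

/-- Any accepted value of `Zmax` on `w` equals `f w`. -/
theorem zmax_val {w : List A} {x : ℝ} (hfw : f w = some x) {s y}
    (h : LAcc (Zmax Mmax Mmin) w s y) : y = x := by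
  obtain ⟨q, q', c, hi, hw, hf, rfl⟩ := h
  obtain ⟨d, hwd⟩ := walk_mono (M := Zmax Mmax Mmin) (M' := ZAut (prodA Mmax Mmin))
    (fun _ _ _ ht => ht) hw
  have lacc0 : LAcc (ZAut (prodA Mmax Mmin)) w s (d + (ZAut (prodA Mmax Mmin)).fwt q') :=
    ⟨q, q', d, hi, hwd, hf, rfl⟩
  obtain ⟨laccP, heq0⟩ := zaut_acc_spec hmax hmin lacc0
  have laccP0 : LAcc (prodA Mmax Mmin) w s 0 := heq0 ▸ laccP
  obtain ⟨q1, q1', c1, hi1, hw1, hf1, hx1⟩ := zero_run_fst hmax hmin w x hfw laccP0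
  have hwmax := zmax_proj hw
  obtain rfl : q1 = q.1 := by
    obtain ⟨t1, ht1⟩ := hw1.head_eq
    obtain ⟨t2, ht2⟩ := hwmax.head_eq
    rw [ht2] at ht1
    exact (List.cons.injEq _ _ _ _ ▸ ht1).1.symm
  obtain ⟨rfl, rfl⟩ := hw1.det hwmax
  rw [hx1]
  rfl

/-- Every word in the domain of `f` is accepted by `Zmax`. -/
theorem zmax_exists {w : List A} {x : ℝ} (hfw : f w = some x) :
    ∃ s, ZAcc (Zmax Mmax Mmin) w s := by
  obtain ⟨s, q, q', c, hi, hw, hf, _⟩ := exists_zero_run hmax hmin w x hfw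
  obtain ⟨c', hw'⟩ := walk_mono (M := ZAut (prodA Mmax Mmin)) (M' := Zmax Mmax Mmin)
    (fun _ _ _ ht => ht) hw
  exact ⟨s, q', ⟨q, c', hi, hw'⟩, hf⟩

omit hmax hmin in
theorem zacc_finite [Finite Q1] [Finite Q2] (w : List A) :
    {s | ZAcc (Zmax Mmax Mmin) w s}.Finite := by
  apply (Set.finite_range (fun ρ : Fin (w.length + 1) → (Q1 × Q2) => List.ofFn ρ)).subset
  rintro s ⟨qf, ⟨q0, c, hi, hw⟩, hfin⟩
  obtain ⟨ρ, _, _, hofn, _, _⟩ := run_of_walk hw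
  exact ⟨ρ, hofn⟩

end Assembly

end LM

/-- Lombardy–Mairesse: a function `f : A* → ℝ ∪ {⊥}` computable both by
a min-plus and by a max-plus word automaton is computable by an unambiguous tropical word
automaton. -/
theorem lombardy_mairesse {A : Type} [Fintype A] {Q1 Q2 : Type} [Fintype Q1] [Fintype Q2]
    (Mmax : WWA A Q1) (Mmin : WWA A Q2) (f : List A → Option ℝ)
    (hmax : WComputesMax Mmax f) (hmin : WComputesMin Mmin f) :
    ∃ (Q : Type) (_ : Fintype Q) (M : WWA A Q),
      WUnambiguous M ∧ WComputesMax M f ∧ WComputesMin M f := by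
  classical
  open LM in
  let T := Q1 × Q2
  let r : T → ℕ := fun t => (Fintype.equivFin T t : ℕ)
  have hr : Function.Injective r := fun a b h =>
    (Fintype.equivFin T).injective (Fin.val_injective h)
  let Z := LM.Zmax Mmax Mmin
  let U := LM.disamb Z r
  -- A: accepted by U implies Mmax-accepted (some value)
  have factA : ∀ (w : List A) σ y, LM.LAcc U w σ y → ∃ z, WAccWeight Mmax w z := by
    intro w σ y h
    obtain ⟨hz, -⟩ := LM.disamb_sound h
    obtain ⟨q, q', c, hi, hw, hf, rfl⟩ := hz
    have hwp := LM.zmax_proj (Mmax := Mmax) (Mmin := Mmin) hw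
    exact ⟨c + Mmax.fwt q'.1, (LM.wacc_iff_lacc _ _ _).mpr
      ⟨(σ.map Prod.fst).map Prod.fst, q.1, q'.1, c, hi.1.1, hwp, hf.1.1, rfl⟩⟩
  -- B: accepted values equal f w
  have factB : ∀ (w : List A) (x : ℝ), f w = some x → ∀ σ y, LM.LAcc U w σ y → y = x := by
    intro w x hfw σ y h
    obtain ⟨hz, -⟩ := LM.disamb_sound h
    exact LM.zmax_val hmax hmin hfw hz
  -- C: words in the domain are accepted with value f w
  have factC : ∀ (w : List A) (x : ℝ), f w = some x → ∃ σ, LM.LAcc U w σ x := by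
    intro w x hfw
    obtain ⟨s0, hs0⟩ := LM.zmax_exists hmax hmin hfw
    obtain ⟨s, hs, hsmin⟩ := LM.exists_minimal_ltl (r := r) _ (LM.zacc_finite w) ⟨s0, hs0⟩
    obtain ⟨σ, y, hlacc, -, -⟩ := LM.disamb_exists hs hsmin
    have := factB w x hfw σ y hlacc
    exact ⟨σ, this ▸ hlacc⟩
  refine ⟨T × Set T, inferInstance, U, ?_, ?_, ?_⟩
  · -- unambiguous
    intro w ρ ρ' hacc hacc'
    have l1 : LM.LAcc U w (List.ofFn ρ) (WWt U w ρ + U.fwt (ρ (Fin.last w.length))) :=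
      ⟨ρ 0, ρ (Fin.last w.length), WWt U w ρ, hacc.1.1,
        LM.walk_of_run ρ hacc.1.2, hacc.2, rfl⟩
    have l2 : LM.LAcc U w (List.ofFn ρ') (WWt U w ρ' + U.fwt (ρ' (Fin.last w.length))) :=
      ⟨ρ' 0, ρ' (Fin.last w.length), WWt U w ρ', hacc'.1.1,
        LM.walk_of_run ρ' hacc'.1.2, hacc'.2, rfl⟩
    obtain ⟨heq, -⟩ := LM.disamb_acc_unique hr l1 l2
    exact List.ofFn_inj.mp heq
  · -- computes max
    intro w
    constructor
    · constructor
      · rintro hfw ⟨x, hwacc⟩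
        obtain ⟨σ, hlacc⟩ := (LM.wacc_iff_lacc U w x).mp hwacc
        exact (hmax w).1.mp hfw (factA w σ x hlacc)
      · intro hno
        cases hfw : f w with
        | none => rfl
        | some x =>
            obtain ⟨σ, hlacc⟩ := factC w x hfw
            exact absurd ⟨x, (LM.wacc_iff_lacc U w x).mpr ⟨σ, hlacc⟩⟩ hno
    · intro x hfw
      obtain ⟨σ, hlacc⟩ := factC w x hfw
      refine ⟨(LM.wacc_iff_lacc U w x).mpr ⟨σ, hlacc⟩, ?_⟩
      intro y hy
      obtain ⟨σ', hlacc'⟩ := (LM.wacc_iff_lacc U w y).mp hy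
      exact le_of_eq (factB w x hfw σ' y hlacc')
  · -- computes min
    intro w
    constructor
    · constructor
      · rintro hfw ⟨x, hwacc⟩
        obtain ⟨σ, hlacc⟩ := (LM.wacc_iff_lacc U w x).mp hwacc
        exact (hmax w).1.mp hfw (factA w σ x hlacc)
      · intro hno
        cases hfw : f w with
        | none => rfl
        | some x =>
            obtain ⟨σ, hlacc⟩ := factC w x hfw
            exact absurd ⟨x, (LM.wacc_iff_lacc U w x).mpr ⟨σ, hlacc⟩⟩ hno
    · intro x hfw
      obtain ⟨σ, hlacc⟩ := factC w x hfw
      refine ⟨(LM.wacc_iff_lacc U w x).mpr ⟨σ, hlacc⟩, ?_⟩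
      intro y hy
      obtain ⟨σ', hlacc'⟩ := (LM.wacc_iff_lacc U w y).mp hy
      exact ge_of_eq (factB w x hfw σ' y hlacc')
end

section
/- Suppose t refines s for P with shift x, i.e., Reach(s) = Reach(t), every run of the max-plus automaton over s to a state p ∈ P has a corresponding run over t to p of weight at least weight(run over s) − x, and every run of the min-plus automaton over s to a state q ∈ P has a corresponding run over t to q of weight at most weight(run over s) − x. Then for every context c with Prod(c) = P (assuming ⟦A_max⟧ ≤ ⟦A_min⟧ globally): ⟦A_max⟧(c∘s) ≤ ⟦A_max⟧(c∘t) + x ≤ ⟦A_min⟧(c∘t) + x ≤ ⟦A_min⟧(c∘s). -/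
/-- A ranked alphabet: symbols with arities. -/
structure RankedAlphabet where
  symb : Type
  ar : symb → ℕ

/-- Terms (finite ranked trees) over a ranked alphabet. -/
inductive Term (A : RankedAlphabet) : Type where
  | node (a : A.symb) (ts : Fin (A.ar a) → Term A) : Term A

/-- Height of a term: length of the longest branch. -/
def Term.height {A : RankedAlphabet} : Term A → ℕ
  | .node _ ts => Finset.univ.sup fun i => (ts i).height + 1

/-- Size of a term: number of nodes. -/
def Term.size {A : RankedAlphabet} : Term A → ℕ
  | .node _ ts => 1 + ∑ i, (ts i).size

/-- A nondeterministic tree automaton with real weights on transitions and final states. -/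
structure WTA (A : RankedAlphabet) (Q : Type) where
  trans : (a : A.symb) → (Fin (A.ar a) → Q) → Q → Prop
  wt : (a : A.symb) → (Fin (A.ar a) → Q) → Q → ℝ
  final : Q → Prop
  fwt : Q → ℝ

/-- Runs of an automaton over a term, reaching a given state at the root. -/
inductive RunOf {A : RankedAlphabet} {Q : Type} (M : WTA A Q) : Term A → Q → Type where
  | node (a : A.symb) (ts : Fin (A.ar a) → Term A) (qs : Fin (A.ar a) → Q) (q : Q)
      (hq : M.trans a qs q) (rs : ∀ i, RunOf M (ts i) (qs i)) : RunOf M (.node a ts) q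

/-- The weight of a run: sum of the weights of the transitions used. -/
def RunOf.wt {A : RankedAlphabet} {Q : Type} {M : WTA A Q} :
    {t : Term A} → {q : Q} → RunOf M t q → ℝ
  | _, _, .node a _ qs q _ rs => (∑ i, (rs i).wt) + M.wt a qs q

/-- Contexts: terms with exactly one hole. -/
inductive Ctx (A : RankedAlphabet) : Type where
  | hole : Ctx A
  | node (a : A.symb) (i : Fin (A.ar a)) (c : Ctx A) (ts : Fin (A.ar a) → Term A) : Ctx A

/-- Plugging a term into the hole of a context. -/
def Ctx.plug {A : RankedAlphabet} : Ctx A → Term A → Term A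
  | .hole, t => t
  | .node a i c ts, t => .node a (Function.update ts i (c.plug t))

/-- Composition of contexts: plugging the second context into the hole of the first. -/
def Ctx.comp {A : RankedAlphabet} : Ctx A → Ctx A → Ctx A
  | .hole, d => d
  | .node a i c ts, d => .node a i (c.comp d) ts

/-- Iterated composition of a context with itself. -/
def Ctx.pow {A : RankedAlphabet} (m : Ctx A) : ℕ → Ctx A
  | 0 => .hole
  | n + 1 => m.comp (m.pow n)

/-- Runs over a context, from a state (at the hole) to a state (at the root). -/
inductive CRun {A : RankedAlphabet} {Q : Type} (M : WTA A Q) : Ctx A → Q → Q → Type where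
  | hole (p : Q) : CRun M .hole p p
  | node (a : A.symb) (i : Fin (A.ar a)) (c : Ctx A) (ts : Fin (A.ar a) → Term A)
      (qs : Fin (A.ar a) → Q) (p q : Q)
      (hq : M.trans a qs q)
      (hc : CRun M c p (qs i))
      (rs : ∀ j, j ≠ i → RunOf M (ts j) (qs j)) : CRun M (.node a i c ts) p q

/-- The weight of a run over a context. -/
def CRun.wt {A : RankedAlphabet} {Q : Type} {M : WTA A Q} :
    {c : Ctx A} → {p q : Q} → CRun M c p q → ℝ
  | _, _, _, .hole _ => 0
  | _, _, _, .node a i _ _ qs _ q _ hc rs =>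
      (∑ j : {j // j ≠ i}, (rs j.1 j.2).wt) + M.wt a qs q + hc.wt

/-- Gluing a run over a context with a run over a term yields a run over the plugged term. -/
def CRun.glue {A : RankedAlphabet} {Q : Type} {M : WTA A Q} {t : Term A} :
    {c : Ctx A} → {p q : Q} → CRun M c p q → RunOf M t p → RunOf M (c.plug t) q
  | _, _, _, .hole _, r => r
  | _, _, _, .node a i c ts qs _ q hq hc rs, r =>
      .node a (Function.update ts i (c.plug t)) qs q hq
        (fun j =>
          if h : j = i then
            cast (by subst h; rw [Function.update_self]) (CRun.glue hc r)
          else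
            cast (congrArg (fun s => RunOf M s (qs j))
              (Function.update_of_ne h (c.plug t) ts).symm) (rs j h))

/-- Gluing runs over composed contexts. -/
def CRun.cglue {A : RankedAlphabet} {Q : Type} {M : WTA A Q} {d : Ctx A} {p : Q} :
    {c : Ctx A} → {q r : Q} → CRun M c q r → CRun M d p q → CRun M (c.comp d) p r
  | _, _, _, .hole _, rd => rd
  | _, _, _, .node a i c ts qs _ r hq hc rs, rd =>
      .node a i (c.comp d) ts qs p r hq (hc.cglue rd) rs

/-- The `n`-fold iteration of a loop run over a context. -/
def CRun.pow {A : RankedAlphabet} {Q : Type} {M : WTA A Q} {m : Ctx A} {q : Q}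
    (σ : CRun M m q q) : (n : ℕ) → CRun M (m.pow n) q q
  | 0 => .hole q
  | n + 1 => σ.cglue (σ.pow n)

/-- `x` is the weight of some accepting run of `M` over `t`
(weight of the run plus the final-state weight). -/
def AccWeight {A : RankedAlphabet} {Q : Type} (M : WTA A Q) (t : Term A) (x : ℝ) : Prop :=
  ∃ (q : Q) (r : RunOf M t q), M.final q ∧ r.wt + M.fwt q = x

/-- `M` has some accepting run over `t`. -/
def HasAcc {A : RankedAlphabet} {Q : Type} (M : WTA A Q) (t : Term A) : Prop :=
  ∃ x, AccWeight M t x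

/-- `f` is the max-plus semantics of `M`: `f t = ⊥` iff there is no accepting run,
and otherwise `f t` is the maximum weight of an accepting run. -/
def ComputesMax {A : RankedAlphabet} {Q : Type} (M : WTA A Q) (f : Term A → Option ℝ) : Prop :=
  ∀ t, (f t = none ↔ ¬ HasAcc M t) ∧
    ∀ x, f t = some x → AccWeight M t x ∧ ∀ y, AccWeight M t y → y ≤ x

/-- `f` is the min-plus semantics of `M`. -/
def ComputesMin {A : RankedAlphabet} {Q : Type} (M : WTA A Q) (f : Term A → Option ℝ) : Prop :=
  ∀ t, (f t = none ↔ ¬ HasAcc M t) ∧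
    ∀ x, f t = some x → AccWeight M t x ∧ ∀ y, AccWeight M t y → x ≤ y

/-- An automaton is unambiguous if every term has at most one accepting run. -/
def Unambiguous {A : RankedAlphabet} {Q : Type} (M : WTA A Q) : Prop :=
  ∀ (t : Term A) (q q' : Q) (r : RunOf M t q) (r' : RunOf M t q'),
    M.final q → M.final q' → q = q' ∧ HEq r r'

/-- The order on `ℝ ∪ {⊥}` in which `⊥` is comparable only with itself. -/
def OLe : Option ℝ → Option ℝ → Prop
  | none, none => True
  | some x, some y => x ≤ y
  | _, _ => False

/-- Shifting a value of `ℝ ∪ {⊥}` by a real number. -/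
def oshift (u : Option ℝ) (x : ℝ) : Option ℝ := u.map (· + x)

/-- The set of states reachable at the root by some run over `t`. -/
def reachSet {A : RankedAlphabet} {Q : Type} (M : WTA A Q) (t : Term A) : Set Q :=
  {q | Nonempty (RunOf M t q)}

/-- The set of states at the hole from which there is an accepting run over the context `c`. -/
def prodSet {A : RankedAlphabet} {Q : Type} (M : WTA A Q) (c : Ctx A) : Set Q :=
  {p | ∃ q, M.final q ∧ Nonempty (CRun M c p q)}

section Bi
variable {A : RankedAlphabet} {Q1 Q2 : Type} (M1 : WTA A Q1) (M2 : WTA A Q2)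

/-- Reachable states of the disjoint union of the two automata. -/
def biReach (t : Term A) : Set (Q1 ⊕ Q2) :=
  Sum.inl '' reachSet M1 t ∪ Sum.inr '' reachSet M2 t

/-- Productive states of the disjoint union of the two automata. -/
def biProd (c : Ctx A) : Set (Q1 ⊕ Q2) :=
  Sum.inl '' prodSet M1 c ∪ Sum.inr '' prodSet M2 c

/-- Final states of the disjoint union of the two automata. -/
def biFinal : Set (Q1 ⊕ Q2) :=
  Sum.inl '' {q | M1.final q} ∪ Sum.inr '' {q | M2.final q}

/-- Transition relation of the disjoint union of the two automata. -/
def biTrans (a : A.symb) (qs : Fin (A.ar a) → Q1 ⊕ Q2) (q : Q1 ⊕ Q2) : Prop :=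
  (∃ (qs' : Fin (A.ar a) → Q1) (q' : Q1),
      qs = Sum.inl ∘ qs' ∧ q = Sum.inl q' ∧ M1.trans a qs' q') ∨
  (∃ (qs' : Fin (A.ar a) → Q2) (q' : Q2),
      qs = Sum.inr ∘ qs' ∧ q = Sum.inr q' ∧ M2.trans a qs' q')

/-- The family `Reachable` of sets of states of the form `Reach(t)`. -/
def ReachableSets : Set (Set (Q1 ⊕ Q2)) := {S | ∃ t, biReach M1 M2 t = S}

/-- The family `Productive` of sets of states of the form `Prod(c)`. -/
def ProductiveSets : Set (Set (Q1 ⊕ Q2)) := {S | ∃ c, biProd M1 M2 c = S}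

/-- `t` refines `s` for `P` with shift `x`. -/
def Refines (P : Set (Q1 ⊕ Q2)) (t s : Term A) (x : ℝ) : Prop :=
  biReach M1 M2 s = biReach M1 M2 t ∧
  (∀ p : Q1, Sum.inl p ∈ P → ∀ ρ : RunOf M1 s p, ∃ ρ' : RunOf M1 t p, ρ.wt ≤ ρ'.wt + x) ∧
  (∀ q : Q2, Sum.inr q ∈ P → ∀ τ : RunOf M2 s q, ∃ τ' : RunOf M2 t q, τ'.wt + x ≤ τ.wt)

end Bi

/-- Transitions of the product automaton `A_pro`, relative to a transition relation `Δ`. -/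
def ProTrans {A : RankedAlphabet} {Q : Type}
    (Δ : ∀ a : A.symb, (Fin (A.ar a) → Q) → Q → Prop) (a : A.symb)
    (RPs : Fin (A.ar a) → Set Q × Set Q) (RP : Set Q × Set Q) : Prop :=
  RP.1 = {r | ∃ rs, Δ a rs r ∧ ∀ j, rs j ∈ (RPs j).1} ∧
  ∀ i, (RPs i).2 =
    {ri | ∃ rs p, Δ a rs p ∧ rs i = ri ∧ (∀ j, j ≠ i → rs j ∈ (RPs j).1) ∧ p ∈ RP.2}

section Aux
variable {A : RankedAlphabet} {Q : Type} {M : WTA A Q}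

lemma wt_cast {t t' : Term A} {q : Q} (h : t = t')
    (e : RunOf M t q = RunOf M t' q) (r : RunOf M t q) :
    (cast e r).wt = r.wt := by subst h; rfl

lemma sum_split {n : ℕ} (i : Fin n) (F : Fin n → ℝ) :
    ∑ j, F j = (∑ j : {j // j ≠ i}, F j.1) + F i := by
  classical
  rw [← Finset.sum_compl_add_sum {i} F, Finset.sum_singleton]
  congr 1
  rw [← Finset.sum_subtype (p := fun j => j ≠ i) ({i}ᶜ) (by simp) F]

lemma glue_wt {t : Term A} : ∀ {c : Ctx A} {p q : Q} (σ : CRun M c p q) (r : RunOf M t p),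
    (σ.glue r).wt = σ.wt + r.wt := by
  intro c p q σ r
  induction σ with
  | hole p => simp [CRun.glue, CRun.wt]; rfl
  | node a i c ts qs p q hq hc rs ih =>
      show (RunOf.node a (Function.update ts i (c.plug t)) qs q hq _).wt = _
      rw [RunOf.wt, sum_split i, dif_pos rfl,
        wt_cast ((Function.update_self i (c.plug t) ts).symm), ih,
        Finset.sum_congr rfl (fun (j : {j // j ≠ i}) _ => by
          rw [dif_neg j.2, wt_cast (Function.update_of_ne j.2 (c.plug t) ts).symm])]
      show _ = (∑ j : {j // j ≠ i}, (rs j.1 j.2).wt) + M.wt a qs q + hc.wt + r.wt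
      ring

lemma run_split {u : Term A} : ∀ (c : Ctx A) {q : Q} (r : RunOf M (c.plug u) q),
    ∃ p, ∃ σ : CRun M c p q, ∃ ρ : RunOf M u p, r.wt = σ.wt + ρ.wt := by
  intro c
  induction c with
  | hole => intro q r; exact ⟨q, .hole q, r, by simp [CRun.wt]; rfl⟩
  | node a i c ts ih =>
      intro q r
      cases r with
      | node _ _ qs q hq rs =>
        have e : Function.update ts i (c.plug u) i = c.plug u := Function.update_self ..
        obtain ⟨p, σ', ρ, hwt⟩ := ih (cast (congrArg (fun s => RunOf M s (qs i)) e) (rs i))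
        rw [wt_cast e] at hwt
        refine ⟨p, .node a i c ts qs p q hq σ'
          (fun j hj => cast (congrArg (fun s => RunOf M s (qs j))
            (Function.update_of_ne hj (c.plug u) ts)) (rs j)), ρ, ?_⟩
        have hsum : (∑ j : {j // j ≠ i},
            (cast (congrArg (fun s => RunOf M s (qs j.1))
              (Function.update_of_ne j.2 (c.plug u) ts)) (rs j.1)).wt)
            = ∑ j : {j // j ≠ i}, (rs j.1).wt :=
          Finset.sum_congr rfl fun j _ =>
            wt_cast (Function.update_of_ne j.2 (c.plug u) ts) _ _
        simp only [RunOf.wt]; rw [sum_split i, hwt, CRun.wt, hsum]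
        ring

end Aux

lemma hasAcc_plug_of_reach {A : RankedAlphabet} {Q : Type} {M : WTA A Q} {u v : Term A}
    (h : reachSet M u ⊆ reachSet M v) (c : Ctx A) :
    HasAcc M (c.plug u) → HasAcc M (c.plug v) := by
  rintro ⟨x, q, r, hq, hx⟩
  obtain ⟨p, σ, ρ, -⟩ := run_split c r
  obtain ⟨ρ'⟩ := h ⟨ρ⟩
  exact ⟨_, q, σ.glue ρ', hq, rfl⟩

lemma reach_eq_of_biReach {A : RankedAlphabet} {Q1 Q2 : Type} {M1 : WTA A Q1} {M2 : WTA A Q2}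
    {s t : Term A} (h : biReach M1 M2 s = biReach M1 M2 t) :
    reachSet M1 s = reachSet M1 t ∧ reachSet M2 s = reachSet M2 t := by
  constructor <;> ext q
  · have := Set.ext_iff.mp h (Sum.inl q)
    simpa [biReach, Set.mem_union, Set.mem_image] using this
  · have := Set.ext_iff.mp h (Sum.inr q)
    simpa [biReach, Set.mem_union, Set.mem_image] using this

theorem refines_shift_separates' {A : RankedAlphabet} {Q1 Q2 : Type}
    [Fintype Q1] [Fintype Q2] (Mmax : WTA A Q1) (Mmin : WTA A Q2)
    (f g : Term A → Option ℝ)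
    (hf : ComputesMax Mmax f) (hg : ComputesMin Mmin g)
    (hle : ∀ u, OLe (f u) (g u))
    (P : Set (Q1 ⊕ Q2)) (s t : Term A) (x : ℝ)
    (href : Refines Mmax Mmin P t s x)
    (c : Ctx A) (hc : biProd Mmax Mmin c = P) :
    OLe (f (c.plug s)) (oshift (f (c.plug t)) x) ∧
    OLe (oshift (f (c.plug t)) x) (oshift (g (c.plug t)) x) ∧
    OLe (oshift (g (c.plug t)) x) (g (c.plug s)) := by
  obtain ⟨hreach, hmax, hmin⟩ := href
  obtain ⟨hr1, hr2⟩ := reach_eq_of_biReach hreach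
  refine ⟨?_, ?_, ?_⟩
  · cases hfs : f (c.plug s) with
    | none =>
        have h1 : ¬ HasAcc Mmax (c.plug s) := (hf _).1.mp hfs
        have h2 : ¬ HasAcc Mmax (c.plug t) := fun h =>
          h1 (hasAcc_plug_of_reach (le_of_eq hr1.symm) c h)
        have h3 : f (c.plug t) = none := (hf _).1.mpr h2
        simp [h3, oshift, OLe]
    | some x0 =>
        obtain ⟨⟨q, r, hfq, hwt⟩, -⟩ := (hf _).2 x0 hfs
        obtain ⟨p, σ, ρ, hsplit⟩ := run_split c r
        have hpP : Sum.inl p ∈ P := hc ▸ Or.inl ⟨p, ⟨q, hfq, ⟨σ⟩⟩, rfl⟩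
        obtain ⟨ρ', hρ'⟩ := hmax p hpP ρ
        have hAcc' : AccWeight Mmax (c.plug t) ((σ.glue ρ').wt + Mmax.fwt q) :=
          ⟨q, σ.glue ρ', hfq, rfl⟩
        cases hft : f (c.plug t) with
        | none => exact absurd ⟨_, hAcc'⟩ ((hf _).1.mp hft)
        | some x1 =>
            have hmax1 := ((hf _).2 x1 hft).2 _ hAcc'
            have hg := glue_wt σ ρ'
            show x0 ≤ x1 + x
            rw [← hwt, hsplit]
            linarith
  · have h := hle (c.plug t)
    cases hft : f (c.plug t) <;> cases hgt : g (c.plug t) <;>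
      rw [hft, hgt] at h <;> simp_all [OLe, oshift]
  · cases hgs : g (c.plug s) with
    | none =>
        have h1 : ¬ HasAcc Mmin (c.plug s) := (hg _).1.mp hgs
        have h2 : ¬ HasAcc Mmin (c.plug t) := fun h =>
          h1 (hasAcc_plug_of_reach (le_of_eq hr2.symm) c h)
        have h3 : g (c.plug t) = none := (hg _).1.mpr h2
        simp [h3, oshift, OLe]
    | some y0 =>
        obtain ⟨⟨q, r, hfq, hwt⟩, -⟩ := (hg _).2 y0 hgs
        obtain ⟨p, σ, τ, hsplit⟩ := run_split c r
        have hpP : Sum.inr p ∈ P := hc ▸ Or.inr ⟨p, ⟨q, hfq, ⟨σ⟩⟩, rfl⟩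
        obtain ⟨τ', hτ'⟩ := hmin p hpP τ
        have hAcc' : AccWeight Mmin (c.plug t) ((σ.glue τ').wt + Mmin.fwt q) :=
          ⟨q, σ.glue τ', hfq, rfl⟩
        cases hgt : g (c.plug t) with
        | none => exact absurd ⟨_, hAcc'⟩ ((hg _).1.mp hgt)
        | some y1 =>
            have hmin1 := ((hg _).2 y1 hgt).2 _ hAcc'
            have hgw := glue_wt σ τ'
            show y1 + x ≤ y0
            rw [← hwt, hsplit]
            linarith

/-- if `t` refines `s` for `P` with shift `x`, and `c` is a context with
`Prod(c) = P`, then (assuming `⟦A_max⟧ ≤ ⟦A_min⟧` globally)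
`⟦A_max⟧(c∘s) ≤ ⟦A_max⟧(c∘t) + x ≤ ⟦A_min⟧(c∘t) + x ≤ ⟦A_min⟧(c∘s)`. -/
theorem refines_shift_separates {A : RankedAlphabet} {Q1 Q2 : Type}
    [Fintype Q1] [Fintype Q2] (Mmax : WTA A Q1) (Mmin : WTA A Q2)
    (f g : Term A → Option ℝ)
    (hf : ComputesMax Mmax f) (hg : ComputesMin Mmin g)
    (hle : ∀ u, OLe (f u) (g u))
    (P : Set (Q1 ⊕ Q2)) (s t : Term A) (x : ℝ)
    (href : Refines Mmax Mmin P t s x)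
    (c : Ctx A) (hc : biProd Mmax Mmin c = P) :
    OLe (f (c.plug s)) (oshift (f (c.plug t)) x) ∧
    OLe (oshift (f (c.plug t)) x) (oshift (g (c.plug t)) x) ∧
    OLe (oshift (g (c.plug t)) x) (g (c.plug s)) := by
  exact refines_shift_separates' Mmax Mmin f g hf hg hle P s t x href c hc
end

section
/- Refinement with shift is a congruence for term construction: let ((R_0,P_0),…,(R_{n-1},P_{n-1}),a,(R,P)) be a transition of the product automaton A_pro (so that p_i ∈ P_i whenever there is a transition (p_0,…,p_{n-1},a,p) of the underlying automaton with p ∈ P and p_j ∈ R_j for j ≠ i), and for each i let t_i, s_i be terms with Reach(t_i) = R_i and t_i refines s_i for P_i with shift x_i. Then a(t_0,…,t_{n-1}) refines a(s_0,…,s_{n-1}) for P with shift x_0 + ⋯ + x_{n-1}. -/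
lemma mem_biReach_inl {A : RankedAlphabet} {Q1 Q2 : Type} (M1 : WTA A Q1) (M2 : WTA A Q2)
    (t : Term A) (q : Q1) :
    Sum.inl q ∈ biReach M1 M2 t ↔ Nonempty (RunOf M1 t q) := by
  simp [biReach, reachSet]

lemma mem_biReach_inr {A : RankedAlphabet} {Q1 Q2 : Type} (M1 : WTA A Q1) (M2 : WTA A Q2)
    (t : Term A) (q : Q2) :
    Sum.inr q ∈ biReach M1 M2 t ↔ Nonempty (RunOf M2 t q) := by
  simp [biReach, reachSet]

/-- refinement with shift is a congruence: if
`((R_0,P_0),…,(R_{n-1},P_{n-1}),a,(R,P))` is a transition of the product automaton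
`A_pro`, `Reach(t_i) = R_i`, and `t_i` refines `s_i` for `P_i` with shift `x_i`, then
`a(t_0,…,t_{n-1})` refines `a(s_0,…,s_{n-1})` for `P` with shift `x_0 + ⋯ + x_{n-1}`. -/
theorem refines_congruence {A : RankedAlphabet} {Q1 Q2 : Type}
    (Mmax : WTA A Q1) (Mmin : WTA A Q2)
    (a : A.symb) (Rs Ps : Fin (A.ar a) → Set (Q1 ⊕ Q2)) (R P : Set (Q1 ⊕ Q2))
    (hR : R ∈ ReachableSets Mmax Mmin) (hP : P ∈ ProductiveSets Mmax Mmin)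
    (hRs : ∀ i, Rs i ∈ ReachableSets Mmax Mmin)
    (hPs : ∀ i, Ps i ∈ ProductiveSets Mmax Mmin)
    (hpro : ProTrans (biTrans Mmax Mmin) a (fun i => (Rs i, Ps i)) (R, P))
    (t s : Fin (A.ar a) → Term A) (x : Fin (A.ar a) → ℝ)
    (hreach : ∀ i, biReach Mmax Mmin (t i) = Rs i)
    (href : ∀ i, Refines Mmax Mmin (Ps i) (t i) (s i) (x i)) :
    Refines Mmax Mmin P (.node a t) (.node a s) (∑ i, x i) := by
  have hbr : ∀ i, biReach Mmax Mmin (s i) = biReach Mmax Mmin (t i) := fun i => (href i).1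
  have hmax : ∀ i q, Nonempty (RunOf Mmax (s i) q) ↔ Nonempty (RunOf Mmax (t i) q) := by
    intro i q
    rw [← mem_biReach_inl Mmax Mmin, ← mem_biReach_inl Mmax Mmin, hbr i]
  have hmin : ∀ i q, Nonempty (RunOf Mmin (s i) q) ↔ Nonempty (RunOf Mmin (t i) q) := by
    intro i q
    rw [← mem_biReach_inr Mmax Mmin, ← mem_biReach_inr Mmax Mmin, hbr i]
  refine ⟨?_, ?_, ?_⟩
  · ext q
    rcases q with q | q
    · rw [mem_biReach_inl, mem_biReach_inl]
      constructor
      · rintro ⟨r⟩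
        cases r with
        | node a ts qs q hq rs =>
          obtain ⟨rs'⟩ := Classical.nonempty_pi.mpr
            (fun i => (hmax i (qs i)).mp ⟨rs i⟩)
          exact ⟨.node a t qs q hq rs'⟩
      · rintro ⟨r⟩
        cases r with
        | node a ts qs q hq rs =>
          obtain ⟨rs'⟩ := Classical.nonempty_pi.mpr
            (fun i => (hmax i (qs i)).mpr ⟨rs i⟩)
          exact ⟨.node a s qs q hq rs'⟩
    · rw [mem_biReach_inr, mem_biReach_inr]
      constructor
      · rintro ⟨r⟩
        cases r with
        | node a ts qs q hq rs =>
          obtain ⟨rs'⟩ := Classical.nonempty_pi.mpr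
            (fun i => (hmin i (qs i)).mp ⟨rs i⟩)
          exact ⟨.node a t qs q hq rs'⟩
      · rintro ⟨r⟩
        cases r with
        | node a ts qs q hq rs =>
          obtain ⟨rs'⟩ := Classical.nonempty_pi.mpr
            (fun i => (hmin i (qs i)).mpr ⟨rs i⟩)
          exact ⟨.node a s qs q hq rs'⟩
  · intro p hp ρ
    cases ρ with
    | node a ts qs q hq rs =>
      have hmem : ∀ i, Sum.inl (qs i) ∈ Ps i := by
        intro i
        have := (hpro.2 i)
        simp only at this
        rw [this]
        refine ⟨Sum.inl ∘ qs, Sum.inl p, Or.inl ⟨qs, p, rfl, rfl, hq⟩, rfl, ?_, hp⟩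
        intro j _
        show Sum.inl (qs j) ∈ Rs j
        rw [← hreach j, mem_biReach_inl]
        exact (hmax j (qs j)).mp ⟨rs j⟩
      have := fun i => (href i).2.1 (qs i) (hmem i) (rs i)
      choose rs' hrs' using this
      refine ⟨.node a t qs p hq rs', ?_⟩
      show (∑ i, (rs i).wt) + Mmax.wt a qs p ≤
        ((∑ i, (rs' i).wt) + Mmax.wt a qs p) + ∑ i, x i
      have : (∑ i, (rs i).wt) ≤ ∑ i, ((rs' i).wt + x i) :=
        Finset.sum_le_sum fun i _ => hrs' i
      rw [Finset.sum_add_distrib] at this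
      linarith
  · intro p hp ρ
    cases ρ with
    | node a ts qs q hq rs =>
      have hmem : ∀ i, Sum.inr (qs i) ∈ Ps i := by
        intro i
        have := (hpro.2 i)
        simp only at this
        rw [this]
        refine ⟨Sum.inr ∘ qs, Sum.inr p, Or.inr ⟨qs, p, rfl, rfl, hq⟩, rfl, ?_, hp⟩
        intro j _
        show Sum.inr (qs j) ∈ Rs j
        rw [← hreach j, mem_biReach_inr]
        exact (hmin j (qs j)).mp ⟨rs j⟩
      have := fun i => (href i).2.2 (qs i) (hmem i) (rs i)
      choose rs' hrs' using this
      refine ⟨.node a t qs p hq rs', ?_⟩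
      show ((∑ i, (rs' i).wt) + Mmin.wt a qs p) + ∑ i, x i ≤
        (∑ i, (rs i).wt) + Mmin.wt a qs p
      have : (∑ i, ((rs' i).wt + x i)) ≤ ∑ i, (rs i).wt :=
        Finset.sum_le_sum fun i _ => hrs' i
      rw [Finset.sum_add_distrib] at this
      linarith
end
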